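/- Let N ≥ 2, c > 0, γ ∈ [0,1), b ∈ (0,1), and set a = b^{1−γ}. Let x*₁ = c / Σ_{i=1}^{N} (a + (i/N)(1−a))^{1/(1−γ)} and x*_n = x*₁(a + ((N−n+1)/N)(1−a))^{1/(1−γ)} for n = 2,…,N, and define p ∈ ℝ^N by p_k = (x*_k)^{γ} / Σ_{j=1}^{N} (x*_j)^{γ}. Let B be the N×N real matrix with B_{i,i+1} = 1 for 1 ≤ i ≤ N−1, B_{N,1} = a, and all other entries 0, and let M = (I − 1pᵀ)B, where 1 is the all-ones column vector. Then every complex eigenvalue λ of M satisfies |λ| < 1. -/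

import Mathlib

set_option maxHeartbeats 1000000 in
open Finset in
/-- Local asymptotic stability of the homogeneous G-AIMD index-policy dynamics:
with `a = b^(1-γ)`, the fixed point `x*`, the probability vector
`p_k = (x*_k)^γ / ∑_j (x*_j)^γ`, the Leslie-type matrix `B` (superdiagonal `1`,
corner entry `B_{N,1} = a`), and the linearization matrix `M = (I - 1pᵀ) B`,
every complex eigenvalue of `M` has modulus strictly less than one. -/
theorem gaimd_linearization_spectral_radius_lt_one
    (N : ℕ) (hN : 2 ≤ N) (c γ b : ℝ) (hc : 0 < c)
    (hγ : γ ∈ Set.Ico (0 : ℝ) 1) (hb : b ∈ Set.Ioo (0 : ℝ) 1)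
    (a : ℝ) (ha : a = b ^ (1 - γ))
    (xstar : Fin N → ℝ)
    (hx1 : xstar ⟨0, by omega⟩ = c / ∑ i ∈ Finset.range N,
      (a + (((i : ℝ) + 1) / N) * (1 - a)) ^ (1 / (1 - γ)))
    (hxn : ∀ i : Fin N, 0 < (i : ℕ) → xstar i = xstar ⟨0, by omega⟩ *
      (a + (((N : ℝ) - (i : ℕ)) / N) * (1 - a)) ^ (1 / (1 - γ)))
    (p : Fin N → ℝ)
    (hp : ∀ k : Fin N, p k = (xstar k) ^ γ / ∑ j : Fin N, (xstar j) ^ γ)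
    (B : Matrix (Fin N) (Fin N) ℝ)
    (hB : ∀ i j : Fin N, B i j =
      if (j : ℕ) = (i : ℕ) + 1 then 1
      else if (i : ℕ) = N - 1 ∧ (j : ℕ) = 0 then a else 0)
    (M : Matrix (Fin N) (Fin N) ℝ)
    (hM : M = (1 - Matrix.of fun _ j : Fin N => p j) * B) :
    ∀ lam : ℂ,
      (∃ v : Fin N → ℂ, v ≠ 0 ∧ (M.map Complex.ofReal).mulVec v = lam • v) →
      ‖lam‖ < 1 := by
  obtain ⟨hγ0, hγ1⟩ := hγ
  obtain ⟨hb0, hb1⟩ := hb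
  have hγ1' : (0:ℝ) < 1 - γ := by linarith
  have ha0 : 0 < a := by rw [ha]; exact Real.rpow_pos_of_pos hb0 _
  have ha1 : a < 1 := by rw [ha]; exact Real.rpow_lt_one hb0.le hb1 hγ1'
  have hNR : (0:ℝ) < N := by positivity
  -- positivity of the fixed point
  have hx0pos : 0 < xstar ⟨0, by omega⟩ := by
    rw [hx1]
    apply div_pos hc
    apply Finset.sum_pos
    · intro i hi
      apply Real.rpow_pos_of_pos
      have h1 : (0:ℝ) ≤ (i:ℝ) + 1 := by positivity
      have h2 : (0:ℝ) ≤ ((i:ℝ) + 1) / N := by positivity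
      nlinarith
    · exact ⟨0, Finset.mem_range.mpr (by omega)⟩
  have hxpos : ∀ i : Fin N, 0 < xstar i := by
    intro i
    rcases Nat.eq_zero_or_pos (i : ℕ) with h | h
    · have hi : i = ⟨0, by omega⟩ := Fin.ext h
      rw [hi]; exact hx0pos
    · rw [hxn i h]
      apply mul_pos hx0pos
      apply Real.rpow_pos_of_pos
      have hi : (i:ℝ) < N := by exact_mod_cast i.isLt
      have h2 : (0:ℝ) ≤ ((N:ℝ) - (i:ℕ)) / N := by
        apply div_nonneg (by linarith) hNR.le
      nlinarith
  -- the probability vector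
  have hSpos : 0 < ∑ j : Fin N, (xstar j) ^ γ := by
    apply Finset.sum_pos (fun j _ => Real.rpow_pos_of_pos (hxpos j) γ)
    exact ⟨⟨0, by omega⟩, Finset.mem_univ _⟩
  have hppos : ∀ k, 0 < p k := fun k => by
    rw [hp k]; exact div_pos (Real.rpow_pos_of_pos (hxpos k) γ) hSpos
  have hpsum : ∑ k : Fin N, p k = 1 := by
    simp only [hp]; rw [← Finset.sum_div]; exact div_self hSpos.ne'
  intro lam ⟨v, hv, heq⟩
  -- abbreviations
  set i0 : Fin N := ⟨0, by omega⟩ with hi0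
  set iN1 : Fin N := ⟨N - 1, by omega⟩ with hiN1
  set q : Fin N → ℝ := fun j => ∑ l, p l * B l j with hq
  set s : ℂ := ∑ j, (q j : ℂ) * v j with hs
  have hMent : ∀ i j, M i j = B i j - q j := by
    intro i j
    rw [hM]
    simp only [Matrix.mul_apply, Matrix.sub_apply, Matrix.one_apply, Matrix.of_apply,
      sub_mul, ite_mul, one_mul, zero_mul, Finset.sum_sub_distrib, Finset.sum_ite_eq,
      Finset.mem_univ, if_true, hq]
  have hrow : ∀ i, lam * v i = (∑ j, (B i j : ℂ) * v j) - s := by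
    intro i
    have h1 := congrFun heq i
    simp only [Matrix.mulVec, Matrix.map_apply, dotProduct, Pi.smul_apply, smul_eq_mul] at h1
    rw [← h1, hs]
    simp only [hMent]
    push_cast
    rw [← Finset.sum_sub_distrib]
    exact Finset.sum_congr rfl fun j _ => by ring
  have hBrow : ∀ n : ℕ, (h : n + 1 < N) → ∀ hn : n < N,
      ∑ j, (B ⟨n, hn⟩ j : ℂ) * v j = v ⟨n + 1, h⟩ := by
    intro n h hn
    rw [Finset.sum_eq_single (⟨n + 1, h⟩ : Fin N)]
    · rw [hB]; simp
    · intro j _ hj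
      rw [hB]
      have h2 : ¬ (j : ℕ) = n + 1 := fun hc => hj (Fin.ext hc)
      have h3 : ¬ (n = N - 1) := by omega
      simp [h2, h3]
    · simp
  have hBlast : ∑ j, (B iN1 j : ℂ) * v j = (a : ℂ) * v i0 := by
    rw [Finset.sum_eq_single i0]
    · rw [hB]
      have h2 : ¬ ((i0 : ℕ) = (iN1 : ℕ) + 1) := by
        have e1 : (i0 : ℕ) = 0 := rfl
        have e2 : (iN1 : ℕ) = N - 1 := rfl
        omega
      have h3 : (iN1 : ℕ) = N - 1 ∧ (i0 : ℕ) = 0 := ⟨rfl, rfl⟩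
      simp [h2, h3]
    · intro j _ hj
      rw [hB]
      have h2 : ¬ (j : ℕ) = (iN1 : ℕ) + 1 := by
        have e2 : (iN1 : ℕ) = N - 1 := rfl
        have := j.isLt
        omega
      have h3 : ¬ (j : ℕ) = 0 := by
        intro hc; exact hj (Fin.ext hc)
      simp [h2, h3]
    · simp
  have hform : ∀ n, (hn : n < N) →
      v ⟨n, hn⟩ = lam ^ n * v i0 + (∑ k ∈ Finset.range n, lam ^ k) * s := by
    intro n
    induction n with
    | zero => intro hn; simp [hi0]
    | succ m ih =>
      intro hn
      have hm : m < N := by omega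
      have h1 : lam * v ⟨m, hm⟩ = (∑ j, (B ⟨m, hm⟩ j : ℂ) * v j) - s := hrow _
      rw [hBrow m hn hm] at h1
      have h2 : v ⟨m + 1, hn⟩ = lam * v ⟨m, hm⟩ + s := by rw [h1]; ring
      rw [h2, ih hm, geom_sum_succ]
      ring
  have hv0form : ∀ k : Fin N, v k = lam ^ (k:ℕ) * v i0 +
      (∑ j ∈ Finset.range (k:ℕ), lam ^ j) * s := by
    intro k
    have h := hform (k:ℕ) k.isLt
    rwa [Fin.eta] at h
  have hpsumC : ∑ k : Fin N, (p k : ℂ) = 1 := by exact_mod_cast congrArg Complex.ofReal hpsum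
  set f : ℂ := ∑ k : Fin N, (p k : ℂ) * lam ^ (k : ℕ) with hf
  set E : ℂ := ∑ k : Fin N, (p k : ℂ) * (∑ j ∈ Finset.range (k : ℕ), lam ^ j) with hE
  have hqsum : ∑ k : Fin N, (p k : ℂ) * (∑ j, (B k j : ℂ) * v j) = s := by
    rw [hs]
    calc ∑ k : Fin N, (p k : ℂ) * ∑ j, (B k j : ℂ) * v j
        = ∑ k : Fin N, ∑ j, (p k : ℂ) * ((B k j : ℂ) * v j) := by
          simp [Finset.mul_sum]
      _ = ∑ j : Fin N, ∑ k, (p k : ℂ) * ((B k j : ℂ) * v j) := Finset.sum_comm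
      _ = ∑ j : Fin N, (q j : ℂ) * v j := by
          refine Finset.sum_congr rfl fun j _ => ?_
          simp only [hq]
          push_cast
          rw [Finset.sum_mul]
          exact Finset.sum_congr rfl fun k _ => by ring
  have hdot : lam ≠ 0 → ∑ k : Fin N, (p k : ℂ) * v k = 0 := by
    intro hl
    have h1 : ∑ k : Fin N, (p k : ℂ) * (lam * v k) = 0 := by
      calc ∑ k : Fin N, (p k : ℂ) * (lam * v k)
          = ∑ k : Fin N, (p k : ℂ) * ((∑ j, (B k j : ℂ) * v j) - s) :=
            Finset.sum_congr rfl fun k _ => by rw [hrow k]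
        _ = (∑ k : Fin N, (p k : ℂ) * (∑ j, (B k j : ℂ) * v j))
              - (∑ k : Fin N, (p k : ℂ)) * s := by
            rw [Finset.sum_mul, ← Finset.sum_sub_distrib]
            exact Finset.sum_congr rfl fun k _ => by ring
        _ = s - s := by rw [hqsum, hpsumC, one_mul]
        _ = 0 := sub_self s
    have h2 : lam * ∑ k : Fin N, (p k : ℂ) * v k = 0 := by
      rw [Finset.mul_sum, ← h1]
      exact Finset.sum_congr rfl fun k _ => by ring
    exact (mul_eq_zero.mp h2).resolve_left hl
  have hNsub : N - 1 + 1 = N := by omega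
  have hgeo : (∑ k ∈ Finset.range N, lam ^ k)
      = lam * (∑ k ∈ Finset.range (N-1), lam ^ k) + 1 := by
    have h := geom_sum_succ (x := lam) (n := N - 1)
    rwa [hNsub] at h
  have hpow : lam ^ N = lam ^ (N-1) * lam := by
    have h := pow_succ lam (N-1)
    rwa [hNsub] at h
  have hbd : (a : ℂ) * v i0 = lam ^ N * v i0 + (∑ k ∈ Finset.range N, lam ^ k) * s := by
    have h1 : lam * v iN1 = (∑ j, (B iN1 j : ℂ) * v j) - s := hrow iN1
    rw [hBlast] at h1
    have h2 : v iN1 = lam ^ (N-1) * v i0 + (∑ k ∈ Finset.range (N-1), lam ^ k) * s :=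
      hform (N-1) (by omega)
    have h3 : (a:ℂ) * v i0 = lam * v iN1 + s := by rw [h1]; ring
    rw [h3, h2, hgeo, hpow]
    ring
  have hdotE : lam ≠ 0 → f * v i0 + E * s = 0 := by
    intro hl
    have h1 := hdot hl
    rw [← h1, hf, hE, Finset.sum_mul, Finset.sum_mul, ← Finset.sum_add_distrib]
    refine Finset.sum_congr rfl fun k _ => ?_
    rw [hv0form k]; ring
  rcases eq_or_ne lam 0 with h0 | h0
  · simp [h0]
  rcases eq_or_ne lam 1 with h1 | h1
  · exfalso
    -- the case lam = 1 : show it is not an eigenvalue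
    set Er : ℝ := ∑ k : Fin N, p k * (k : ℕ) with hEr
    have hErE : E = (Er : ℂ) := by
      rw [hE, hEr, h1]
      push_cast
      exact Finset.sum_congr rfl fun k _ => by simp
    have hf1 : f = 1 := by
      rw [hf, h1]
      simpa using hpsumC
    have hA : (a:ℂ) * v i0 = v i0 + (N:ℂ) * s := by
      have h := hbd
      rw [h1] at h
      simpa using h
    have hBq : v i0 + (Er:ℂ) * s = 0 := by
      have h := hdotE h0
      rw [hf1, hErE, one_mul] at h
      exact h
    have hkey : s * (((1:ℂ) - a) * Er - N) = 0 := by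
      linear_combination hA + ((1:ℂ) - a) * hBq
    have hErnn : 0 ≤ Er := by
      rw [hEr]
      exact Finset.sum_nonneg fun k _ => mul_nonneg (hppos k).le (by positivity)
    have hErle : Er ≤ N - 1 := by
      rw [hEr]
      calc ∑ k : Fin N, p k * (k : ℕ)
          ≤ ∑ k : Fin N, p k * ((N:ℝ) - 1) := by
            refine Finset.sum_le_sum fun k _ => ?_
            refine mul_le_mul_of_nonneg_left ?_ (hppos k).le
            have := k.isLt
            have h2 : ((k:ℕ):ℝ) ≤ (N:ℝ) - 1 := by
              have h3 : (k:ℕ) ≤ N - 1 := by omega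
              have h4 : ((k:ℕ):ℝ) ≤ ((N - 1 : ℕ):ℝ) := by exact_mod_cast h3
              rw [Nat.cast_sub (by omega)] at h4
              simpa using h4
            exact h2
        _ = (N:ℝ) - 1 := by rw [← Finset.sum_mul, hpsum, one_mul]
    have hcoef : ((1:ℂ) - a) * Er - N ≠ 0 := by
      have hreal : ((1:ℂ) - a) * (Er:ℂ) - (N:ℂ) = (((1 - a) * Er - N : ℝ) : ℂ) := by
        push_cast; ring
      rw [hreal]
      rw [Complex.ofReal_ne_zero]
      have hlt : (1 - a) * Er < N := by nlinarith
      linarith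
    have hs0 : s = 0 := by
      rcases mul_eq_zero.mp hkey with h | h
      · exact h
      · exact absurd h hcoef
    have hv00 : v i0 = 0 := by
      have := hBq
      rw [hs0] at this
      simpa using this
    apply hv
    funext k
    rw [hv0form k, hv00, hs0]
    simp
  -- main case : lam ≠ 0, lam ≠ 1
  have hD : ((a:ℂ) - lam ^ N) * E + (∑ k ∈ Finset.range N, lam ^ k) * f = 0 := by
    rcases eq_or_ne (v i0) 0 with hv0 | hv0
    · have hs1 : (∑ k ∈ Finset.range N, lam ^ k) * s = 0 := by
        have h := hbd
        rw [hv0] at h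
        simpa using h.symm
      have hs2 : E * s = 0 := by
        have h := hdotE h0
        rw [hv0] at h
        simpa using h
      have hsne : s ≠ 0 := by
        intro hs0
        apply hv
        funext k
        rw [hv0form k, hv0, hs0]
        simp
      have h1 : (∑ k ∈ Finset.range N, lam ^ k) = 0 := (mul_eq_zero.mp hs1).resolve_right hsne
      have h2 : E = 0 := (mul_eq_zero.mp hs2).resolve_right hsne
      rw [h1, h2]
      ring
    · have h1 : (((a:ℂ) - lam ^ N) * E + (∑ k ∈ Finset.range N, lam ^ k) * f) * v i0 = 0 := by
        linear_combination E * hbd + (∑ k ∈ Finset.range N, lam ^ k) * (hdotE h0)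
      exact (mul_eq_zero.mp h1).resolve_right hv0
  have hgm : (∑ k ∈ Finset.range N, lam ^ k) * (lam - 1) = lam ^ N - 1 := geom_sum_mul lam N
  have hEm : E * (lam - 1) = f - 1 := by
    have h : E * (lam - 1) = ∑ k : Fin N, ((p k:ℂ) * lam ^ (k:ℕ) - (p k:ℂ)) := by
      rw [hE, Finset.sum_mul]
      refine Finset.sum_congr rfl fun k _ => ?_
      rw [mul_assoc, geom_sum_mul]
      ring
    rw [h, Finset.sum_sub_distrib, hpsumC, ← hf]
  have hchar : lam ^ N = (a:ℂ) + ((1:ℂ) - a) * f := by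
    have h2 : (((a:ℂ) - lam ^ N) * E + (∑ k ∈ Finset.range N, lam ^ k) * f) * (lam - 1) = 0 := by
      rw [hD]; ring
    have h3 : ((a:ℂ) - lam ^ N) * (f - 1) + (lam ^ N - 1) * f = 0 := by
      linear_combination h2 - ((a:ℂ) - lam ^ N) * hEm - f * hgm
    linear_combination h3
  -- final modulus argument
  clear hD hgm hEm hbd hdotE hdot hqsum hv0form hform hBlast hBrow hrow hMent heq hv
  clear hs hq hgeo hpow hE E
  clear hM hB hp hx1 hxn hxpos hx0pos hSpos s q v B M xstar
  by_contra hge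
  push_neg at hge
  set r := ‖lam‖ with hr
  have habs1 : ∀ k : Fin N, ‖(p k:ℂ) * lam ^ (k:ℕ)‖ = p k * r ^ (k:ℕ) := by
    intro k
    rw [norm_mul, norm_pow, Complex.norm_real, Real.norm_of_nonneg (hppos k).le, ← hr]
  have hfabs : ‖f‖ ≤ ∑ k : Fin N, p k * r ^ (k:ℕ) := by
    rw [hf]
    refine le_trans (norm_sum_le _ _) (le_of_eq ?_)
    exact Finset.sum_congr rfl fun k _ => habs1 k
  have hfle : ‖f‖ ≤ r ^ (N-1) := by
    refine hfabs.trans ?_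
    calc ∑ k : Fin N, p k * r ^ (k:ℕ) ≤ ∑ k : Fin N, p k * r ^ (N-1) := by
          refine Finset.sum_le_sum fun k _ => ?_
          refine mul_le_mul_of_nonneg_left ?_ (hppos k).le
          exact pow_le_pow_right₀ hge (by have := k.isLt; omega)
      _ = r ^ (N-1) := by rw [← Finset.sum_mul, hpsum, one_mul]
  have hrN : r ^ N = ‖(a:ℂ) + ((1:ℂ)-(a:ℝ)) * f‖ := by
    rw [← hchar, norm_pow]
  have habsle : ‖(a:ℂ) + ((1:ℂ)-(a:ℝ)) * f‖ ≤ a + (1-a) * ‖f‖ := by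
    refine le_trans (norm_add_le _ _) ?_
    rw [norm_mul, Complex.norm_real, Real.norm_of_nonneg ha0.le]
    have h2 : ‖((1:ℂ) - (a:ℝ))‖ = 1 - a := by
      rw [show ((1:ℂ) - (a:ℝ)) = ((1 - a : ℝ) : ℂ) by push_cast; ring, Complex.norm_real,
        Real.norm_of_nonneg (by linarith)]
    rw [h2]
  rcases eq_or_lt_of_le hge with hre | hrgt
  · -- |lam| = 1 : strict triangle inequality using the first two coefficients
    have hr1 : r = 1 := hre.symm
    have hnormSq : lam.re ^ 2 + lam.im ^ 2 = 1 := by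
      have h := Complex.sq_norm lam
      rw [← hr, hr1, Complex.normSq_apply] at h
      linear_combination -h
    have hre1 : lam.re < 1 := by
      rcases lt_or_eq_of_le (Complex.re_le_norm lam) with h | h
      · rw [← hr, hr1] at h; exact h
      · exfalso
        apply h1
        have hre' : lam.re = 1 := by rw [h, ← hr, hr1]
        have him : lam.im = 0 := by nlinarith [hnormSq]
        exact Complex.ext (by simp [hre']) (by simp [him])
    set k1 : Fin N := ⟨1, by omega⟩ with hk1
    have hne : i0 ≠ k1 := by
      intro h
      have h' : (i0:ℕ) = (k1:ℕ) := congrArg Fin.val h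
      have e0 : (i0:ℕ) = 0 := rfl
      have e1 : (k1:ℕ) = 1 := rfl
      omega
    have hpair : ‖(p i0:ℂ) + (p k1:ℂ) * lam‖ < p i0 + p k1 := by
      have hnn : (0:ℝ) ≤ p i0 + p k1 := by
        have := hppos i0; have := hppos k1; linarith
      refine lt_of_pow_lt_pow_left₀ 2 hnn ?_
      rw [Complex.sq_norm, Complex.normSq_apply]
      simp only [Complex.add_re, Complex.add_im, Complex.ofReal_re, Complex.ofReal_im,
        Complex.mul_re, Complex.mul_im]
      have h2 := hppos i0
      have h3 := hppos k1
      have hkey : (p k1)^2 * (lam.re^2 + lam.im^2) = (p k1)^2 := by rw [hnormSq]; ring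
      nlinarith [hkey, hre1, mul_pos h2 h3]
    have hsplit : f = (∑ k ∈ Finset.univ \ {i0, k1}, (p k:ℂ) * lam ^ (k:ℕ))
        + ((p i0:ℂ) + (p k1:ℂ) * lam) := by
      rw [hf, ← Finset.sum_sdiff (Finset.subset_univ ({i0, k1} : Finset (Fin N)))]
      congr 1
      rw [Finset.sum_pair hne]
      have e0 : (i0:ℕ) = 0 := rfl
      have e1 : (k1:ℕ) = 1 := rfl
      rw [e0, e1, pow_zero, pow_one, mul_one]
    have hrest : ‖∑ k ∈ Finset.univ \ {i0, k1}, (p k:ℂ) * lam ^ (k:ℕ)‖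
        ≤ ∑ k ∈ Finset.univ \ {i0, k1}, p k := by
      refine le_trans (norm_sum_le _ _) (le_of_eq ?_)
      refine Finset.sum_congr rfl fun k _ => ?_
      rw [habs1 k, hr1, one_pow, mul_one]
    have hsumrest : ∑ k ∈ Finset.univ \ {i0, k1}, p k = 1 - (p i0 + p k1) := by
      have h := Finset.sum_sdiff (f := p) (Finset.subset_univ ({i0, k1} : Finset (Fin N)))
      rw [hpsum, Finset.sum_pair hne] at h
      linarith
    have hflt : ‖f‖ < 1 := by
      rw [hsplit]
      calc ‖_‖ ≤ ‖∑ k ∈ Finset.univ \ {i0, k1}, (p k:ℂ) * lam ^ (k:ℕ)‖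
            + ‖(p i0:ℂ) + (p k1:ℂ) * lam‖ := norm_add_le _ _
        _ < (1 - (p i0 + p k1)) + (p i0 + p k1) := by
            rw [← hsumrest]
            exact add_lt_add_of_le_of_lt hrest hpair
        _ = 1 := by ring
    have hfin : r ^ N < 1 := by
      rw [hrN]
      calc ‖_‖ ≤ a + (1-a) * ‖f‖ := habsle
        _ < a + (1-a) * 1 := by
            have : (0:ℝ) < 1 - a := by linarith
            nlinarith [hflt]
        _ = 1 := by ring
    rw [hr1, one_pow] at hfin
    exact absurd hfin (by norm_num)
  · -- |lam| > 1
    have hrr : r ^ (N-1) * r = r ^ N := by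
      have h := pow_succ r (N-1)
      rw [hNsub] at h
      exact h.symm
    have hrn1 : (1:ℝ) ≤ r ^ (N-1) := by
      calc (1:ℝ) = 1 ^ (N-1) := (one_pow _).symm
        _ ≤ r ^ (N-1) := pow_le_pow_left₀ (by norm_num) hge _
    have hkey : r ^ N ≤ a + (1-a) * r ^ (N-1) := by
      rw [hrN]
      refine habsle.trans ?_
      nlinarith [hfle]
    nlinarith [hkey, hrn1, hrr, hrgt, ha0, ha1]
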